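/- There exist complex numbers γ and δ such that: c(s) − (6/π)/(s−1) tends to γ as s → 1 (s ≠ 1); (c(u) + 1)/u tends to δ as u → 0 (u ≠ 0); and the function (1/3)·c(u)·c(3u−1)·c(u+1)·c(2u+1) − (3/π)/u tends to 3γ − (3/π)δ as u → 0 (u ≠ 0). (This is the scalar Laurent-expansion computation carried out in the proof of the paper's identity of unramified Eisenstein series: with κ = c_{−1,1} = 6/π, the product (1/3)c(u)c(3u−1)c(u+1)c(2u+1) equals κ/(2u) + (3c_{0,1} − κc_{1,0}/2) + O(u).) -/

import Mathlib

open Filter Topology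

/-- `c(s) = Λ(s)/Λ(s+1)`, the ratio of completed Riemann zeta values from the paper. -/
noncomputable def paperC (s : ℂ) : ℂ := completedRiemannZeta s / completedRiemannZeta (s + 1)

open Complex

noncomputable def gg (u : ℂ) : ℂ := completedRiemannZeta₀ u - 1 / (1 - u)
noncomputable def FF (u : ℂ) : ℂ := completedRiemannZeta (2 + u)

lemma lam_eq (u : ℂ) : completedRiemannZeta u = gg u - 1 / u := by
  rw [completedRiemannZeta_eq, gg]; ring

lemma lam_eq' (u : ℂ) : completedRiemannZeta (1 + u) = gg (-u) + 1 / u := by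
  rw [completedRiemannZeta_eq, gg,
    show completedRiemannZeta₀ (1 + u) = completedRiemannZeta₀ (-u) by
      rw [← completedRiemannZeta₀_one_sub (-u)]; ring_nf,
    show (1 : ℂ) - (1 + u) = -u by ring, show (1 : ℂ) - -u = 1 + u by ring,
    div_neg]
  ring

lemma lam_FF (u : ℂ) : completedRiemannZeta (2 - u) = FF (-u) := by
  rw [FF, show (2 : ℂ) + -u = 2 - u by ring]

lemma Gr2 : Gammaℝ 2 = ((Real.pi : ℂ))⁻¹ := by
  rw [Gammaℝ_def, show (-2 : ℂ) / 2 = -1 by norm_num, show (2 : ℂ) / 2 = 1 by norm_num,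
    Complex.Gamma_one, cpow_neg, cpow_one, mul_one]

lemma pi_ne : (Real.pi : ℂ) ≠ 0 := by
  exact_mod_cast Real.pi_ne_zero

lemma lam_two : completedRiemannZeta 2 = (Real.pi : ℂ) / 6 := by
  have h := riemannZeta_def_of_ne_zero (two_ne_zero (α := ℂ))
  rw [riemannZeta_two, Gr2] at h
  field_simp at h
  have h6 : completedRiemannZeta 2 * ((Real.pi : ℂ) * 6) = ((Real.pi : ℂ) / 6) * ((Real.pi : ℂ) * 6) := by
    field_simp
    linear_combination -h
  exact mul_right_cancel₀ (by simp [Real.pi_ne_zero]) h6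

lemma hg_diff : DifferentiableAt ℂ gg 0 := by
  apply DifferentiableAt.sub
  · exact (differentiable_completedZeta₀ 0)
  · exact (differentiableAt_const 1).div ((differentiableAt_const 1).sub differentiableAt_id)
      (by norm_num)

lemma hF_diff : DifferentiableAt ℂ FF 0 := by
  have h2 : DifferentiableAt ℂ completedRiemannZeta ((fun u : ℂ => 2 + u) 0) := by
    simpa using differentiableAt_completedZeta (s := 2) (by norm_num) (by norm_num)
  exact h2.comp 0 ((differentiableAt_const 2).add differentiableAt_id)

lemma hF0 : FF 0 = (Real.pi : ℂ) / 6 := by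
  rw [FF, add_zero, lam_two]

lemma hasDerivAt_comp_lin (f : ℂ → ℂ) (f' c : ℂ) (h : HasDerivAt f f' 0) :
    HasDerivAt (fun u : ℂ => f (c * u)) (f' * c) 0 := by
  have hin : HasDerivAt (fun u : ℂ => c * u) c 0 := by
    simpa using (hasDerivAt_id (0 : ℂ)).const_mul c
  have hpt : HasDerivAt f f' (c * 0) := by simpa using h
  exact hpt.comp 0 hin

set_option maxHeartbeats 1600000 in
/-- There are complex numbers `γ = c_{0,1}` and `δ = c_{1,0}` with
`c(s) - (6/π)/(s-1) → γ` as `s → 1` and `(c(u)+1)/u → δ` as `u → 0`, such that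
`(1/3)·c(u)·c(3u-1)·c(u+1)·c(2u+1) - (3/π)/u → 3γ - (3/π)δ` as `u → 0`; that is,
the product equals `(6/π)/(2u) + (3c_{0,1} - (6/π)c_{1,0}/2) + O(u)`. -/
theorem paperC_product_laurent_expansion :
    ∃ γ δ : ℂ,
      Tendsto (fun s : ℂ => paperC s - (6 / (Real.pi : ℂ)) / (s - 1)) (𝓝[≠] (1 : ℂ)) (𝓝 γ) ∧
      Tendsto (fun u : ℂ => (paperC u + 1) / u) (𝓝[≠] (0 : ℂ)) (𝓝 δ) ∧
      Tendsto (fun u : ℂ =>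
          (1 / 3 : ℂ) * paperC u * paperC (3 * u - 1) * paperC (u + 1) * paperC (2 * u + 1) -
            (3 / (Real.pi : ℂ)) / u)
        (𝓝[≠] (0 : ℂ)) (𝓝 (3 * γ - (3 / (Real.pi : ℂ)) * δ)) := by
  set L : ℂ := (Real.pi : ℂ) / 6 with hLdef
  have hL : L ≠ 0 := by rw [hLdef]; simp [Real.pi_ne_zero]
  have hF0' : FF 0 = L := by rw [hLdef]; exact hF0
  have cg := hg_diff.continuousAt
  have cF := hF_diff.continuousAt
  have tid : Tendsto (fun u : ℂ => u) (𝓝[≠] (0 : ℂ)) (𝓝 0) :=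
    tendsto_id.mono_left nhdsWithin_le_nhds
  have tg : ∀ c : ℂ, Tendsto (fun u : ℂ => gg (c * u)) (𝓝[≠] (0 : ℂ)) (𝓝 (gg 0)) := by
    intro c
    have h1 : Tendsto (fun u : ℂ => c * u) (𝓝[≠] (0 : ℂ)) (𝓝 0) := by
      simpa using tid.const_mul c
    exact cg.tendsto.comp h1
  have tF : ∀ c : ℂ, Tendsto (fun u : ℂ => FF (c * u)) (𝓝[≠] (0 : ℂ)) (𝓝 L) := by
    intro c
    have h1 : Tendsto (fun u : ℂ => c * u) (𝓝[≠] (0 : ℂ)) (𝓝 0) := by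
      simpa using tid.const_mul c
    exact hF0' ▸ cF.tendsto.comp h1
  have tgneg : Tendsto (fun u : ℂ => gg (-u)) (𝓝[≠] (0 : ℂ)) (𝓝 (gg 0)) := by
    simpa only [neg_one_mul] using tg (-1)
  have hu : ∀ᶠ u in 𝓝[≠] (0 : ℂ), u ≠ 0 :=
    eventually_mem_nhdsWithin.mono fun u h => by simpa using h
  have ty1 : Tendsto (fun u : ℂ => 1 + u * gg (-u)) (𝓝[≠] (0 : ℂ)) (𝓝 1) := by
    simpa using (tid.mul tgneg).const_add 1
  have hy1 : ∀ᶠ u in 𝓝[≠] (0 : ℂ), 1 + u * gg (-u) ≠ 0 := ty1.eventually_ne one_ne_zero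
  refine ⟨(L * gg 0 - deriv FF 0) / (L * L), 2 * gg 0, ?_, ?_, ?_⟩
  · -- gamma limit
    have hsub : Tendsto (fun s : ℂ => s - 1) (𝓝[≠] (1 : ℂ)) (𝓝[≠] (0 : ℂ)) := by
      rw [tendsto_nhdsWithin_iff]
      constructor
      · have h1 : Tendsto (fun s : ℂ => s - 1) (𝓝 (1 : ℂ)) (𝓝 0) := by
          simpa using (continuous_sub_right (1 : ℂ)).tendsto (1 : ℂ)
        exact h1.mono_left nhdsWithin_le_nhds
      · filter_upwards [eventually_mem_nhdsWithin] with s hs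
        simpa [sub_eq_zero] using hs
    have hslope : Tendsto (fun s : ℂ => (FF (s - 1) - FF 0) / (s - 1)) (𝓝[≠] (1 : ℂ))
        (𝓝 (deriv FF 0)) := by
      have h1 := (hasDerivAt_iff_tendsto_slope.mp hF_diff.hasDerivAt).comp hsub
      refine h1.congr fun s => ?_
      simp [Function.comp, slope_def_field]
    have tgs : Tendsto (fun s : ℂ => gg (1 - s)) (𝓝[≠] (1 : ℂ)) (𝓝 (gg 0)) := by
      have h1 : Tendsto (fun s : ℂ => 1 - s) (𝓝[≠] (1 : ℂ)) (𝓝 0) := by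
        have h2 := (continuous_sub_left (1 : ℂ)).tendsto (1 : ℂ)
        simpa using h2.mono_left nhdsWithin_le_nhds
      exact cg.tendsto.comp h1
    have tFs : Tendsto (fun s : ℂ => FF (s - 1)) (𝓝[≠] (1 : ℂ)) (𝓝 L) :=
      hF0' ▸ cF.tendsto.comp (hsub.mono_right nhdsWithin_le_nhds)
    have hFne : ∀ᶠ s in 𝓝[≠] (1 : ℂ), FF (s - 1) ≠ 0 := tFs.eventually_ne hL
    have hs1 : ∀ᶠ s in 𝓝[≠] (1 : ℂ), s ≠ 1 :=
      eventually_mem_nhdsWithin.mono fun s h => by simpa using h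
    have key1 : Tendsto (fun s : ℂ =>
        (L * gg (1 - s) - (FF (s - 1) - FF 0) / (s - 1)) / (L * FF (s - 1))) (𝓝[≠] (1 : ℂ))
        (𝓝 ((L * gg 0 - deriv FF 0) / (L * L))) :=
      ((tgs.const_mul L).sub hslope).div (tFs.const_mul L) (mul_ne_zero hL hL)
    refine Tendsto.congr' ?_ key1
    filter_upwards [hs1, hFne] with s h1 h2
    have hv : s - 1 ≠ 0 := sub_ne_zero.mpr h1
    have e1 : completedRiemannZeta s = gg (1 - s) + 1 / (s - 1) := by
      have h3 := lam_eq' (s - 1)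
      rw [show (1 : ℂ) + (s - 1) = s by ring, show -(s - 1) = 1 - s by ring] at h3
      exact h3
    have e2 : completedRiemannZeta (s + 1) = FF (s - 1) := by
      rw [FF, show (2 : ℂ) + (s - 1) = s + 1 by ring]
    rw [paperC, e1, e2, hF0', show (6 : ℂ) / Real.pi = 1 / L by rw [hLdef, one_div_div]]
    field_simp
    ring
  · -- delta limit
    have key2 : Tendsto (fun u : ℂ => (gg u + gg (-u)) / (1 + u * gg (-u))) (𝓝[≠] (0 : ℂ))
        (𝓝 (2 * gg 0)) := by
      have hnum : Tendsto (fun u : ℂ => gg u + gg (-u)) (𝓝[≠] (0 : ℂ)) (𝓝 (gg 0 + gg 0)) :=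
        (cg.tendsto.mono_left nhdsWithin_le_nhds).add tgneg
      rw [two_mul, ← div_one (gg 0 + gg 0)]; exact hnum.div ty1 one_ne_zero
    refine Tendsto.congr' ?_ key2
    filter_upwards [hu, hy1] with u h0 h1
    have hden : gg (-u) + 1 / u ≠ 0 := by
      intro hzero
      apply h1
      have h2 := congrArg (fun z => u * z) hzero
      simp only [mul_zero, mul_add, mul_one_div, div_self h0] at h2
      linear_combination h2
    rw [paperC, lam_eq u, show u + 1 = 1 + u by ring, lam_eq' u]
    field_simp [h0, hden, h1]
    have hinv : (1 + u * gg (-u)) * (1 + u * gg (-u))⁻¹ = 1 := mul_inv_cancel₀ h1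
    linear_combination (1 - gg u * u) * hinv
  · -- product limit
    have hgd : HasDerivAt gg (deriv gg 0) 0 := hg_diff.hasDerivAt
    have hFd : HasDerivAt FF (deriv FF 0) 0 := hF_diff.hasDerivAt
    have hd1 : HasDerivAt (fun u : ℂ => u * gg u - 1) (gg 0) 0 := by
      simpa using ((hasDerivAt_id (0 : ℂ)).mul hgd).sub_const 1
    have hd2 : HasDerivAt (fun u : ℂ => FF (-3 * u)) (deriv FF 0 * -3) 0 :=
      hasDerivAt_comp_lin FF _ _ hFd
    have hgm : ∀ c : ℂ, HasDerivAt (fun u : ℂ => gg (c * u)) (deriv gg 0 * c) 0 :=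
      fun c => hasDerivAt_comp_lin gg _ c hgd
    have hd3 : HasDerivAt (fun u : ℂ => 1 + 2 * u * gg (-2 * u)) (2 * gg 0) 0 := by
      have hb : HasDerivAt (fun u : ℂ => 2 * u) 2 0 := by
        simpa using (hasDerivAt_id (0 : ℂ)).const_mul (2 : ℂ)
      simpa using (hb.mul (hgm (-2))).const_add 1
    have hd4 : HasDerivAt (fun u : ℂ => 3 * u * gg (3 * u) - 1) (3 * gg 0) 0 := by
      have hb : HasDerivAt (fun u : ℂ => 3 * u) 3 0 := by
        simpa using (hasDerivAt_id (0 : ℂ)).const_mul (3 : ℂ)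
      simpa using (hb.mul (hgm 3)).sub_const 1
    have hd6 : HasDerivAt (fun u : ℂ => FF (2 * u)) (deriv FF 0 * 2) 0 :=
      hasDerivAt_comp_lin FF _ 2 hFd
    set A : ℂ → ℂ := fun u =>
      L * ((u * gg u - 1) * FF (-3 * u) * (1 + 2 * u * gg (-2 * u))) -
        (3 * u * gg (3 * u) - 1) * FF u * FF (2 * u) with hAdef
    have hA : HasDerivAt A (6 * deriv FF 0 * L - 4 * gg 0 * (L * L)) 0 := by
      have h5 := (((hd1.mul hd2).mul hd3).const_mul L).sub ((hd4.mul hFd).mul hd6)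
      refine h5.congr_deriv ?_
      norm_num [hF0', Pi.mul_apply]
      ring
    have hA0 : A 0 = 0 := by
      rw [hAdef]
      norm_num [hF0']
    have hslope3 : Tendsto (fun u : ℂ => A u / u) (𝓝[≠] (0 : ℂ))
        (𝓝 (6 * deriv FF 0 * L - 4 * gg 0 * (L * L))) := by
      have h7 := hasDerivAt_iff_tendsto_slope.mp hA
      refine h7.congr fun u => ?_
      simp [slope_def_field, hA0]
    have ty2 : Tendsto (fun u : ℂ => 3 * u * gg (3 * u) - 1) (𝓝[≠] (0 : ℂ)) (𝓝 (-1)) := by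
      have hb : Tendsto (fun u : ℂ => 3 * u) (𝓝[≠] (0 : ℂ)) (𝓝 0) := by
        simpa using tid.const_mul 3
      simpa using (hb.mul (tg 3)).sub_const 1
    have hy2 : ∀ᶠ u in 𝓝[≠] (0 : ℂ), 3 * u * gg (3 * u) - 1 ≠ 0 :=
      ty2.eventually_ne (by norm_num)
    have tFu : Tendsto (fun u : ℂ => FF u) (𝓝[≠] (0 : ℂ)) (𝓝 L) :=
      hF0' ▸ cF.tendsto.mono_left nhdsWithin_le_nhds
    have hy3 : ∀ᶠ u in 𝓝[≠] (0 : ℂ), FF u ≠ 0 := tFu.eventually_ne hL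
    have hy4 : ∀ᶠ u in 𝓝[≠] (0 : ℂ), FF (2 * u) ≠ 0 := (tF 2).eventually_ne hL
    have hden0 : (2 : ℂ) * L * (-1 * L * L) ≠ 0 :=
      mul_ne_zero (mul_ne_zero two_ne_zero hL)
        (mul_ne_zero (mul_ne_zero (by norm_num) hL) hL)
    have tden : Tendsto (fun u : ℂ => 2 * L * ((3 * u * gg (3 * u) - 1) * FF u * FF (2 * u)))
        (𝓝[≠] (0 : ℂ)) (𝓝 (2 * L * (-1 * L * L))) :=
      ((ty2.mul tFu).mul (tF 2)).const_mul (2 * L)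
    have key3 : Tendsto (fun u : ℂ =>
        (A u / u) / (2 * L * ((3 * u * gg (3 * u) - 1) * FF u * FF (2 * u)))) (𝓝[≠] (0 : ℂ))
        (𝓝 ((6 * deriv FF 0 * L - 4 * gg 0 * (L * L)) / (2 * L * (-1 * L * L)))) :=
      hslope3.div tden hden0
    have hval : 3 * ((L * gg 0 - deriv FF 0) / (L * L)) - 3 / (Real.pi : ℂ) * (2 * gg 0)
        = (6 * deriv FF 0 * L - 4 * gg 0 * (L * L)) / (2 * L * (-1 * L * L)) := by
      rw [hLdef]
      have hp := pi_ne
      field_simp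
      ring
    rw [hval]
    refine Tendsto.congr' ?_ key3
    filter_upwards [hu, hy1, hy2, hy3, hy4] with u h0 hh1 hh2 hh3 hh4
    have hden1 : gg (-u) + 1 / u ≠ 0 := by
      intro hzero
      apply hh1
      have h2 := congrArg (fun z => u * z) hzero
      simp only [mul_zero, mul_add, mul_one_div, div_self h0] at h2
      linear_combination h2
    have h30 : (3 : ℂ) * u ≠ 0 := by simp [h0]
    have h20 : (2 : ℂ) * u ≠ 0 := by simp [h0]
    have hden2 : gg (3 * u) - 1 / (3 * u) ≠ 0 := by
      intro hzero
      apply hh2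
      have h2 := congrArg (fun z => (3 * u) * z) hzero
      simp only [mul_zero, mul_sub, mul_one_div, div_self h30] at h2
      linear_combination h2
    have e1 : paperC u = (gg u - 1 / u) / (gg (-u) + 1 / u) := by
      rw [paperC, lam_eq u, show u + 1 = 1 + u by ring, lam_eq' u]
    have e2 : paperC (3 * u - 1) = FF (-3 * u) / (gg (3 * u) - 1 / (3 * u)) := by
      rw [paperC, show (3 * u - 1 : ℂ) + 1 = 3 * u by ring, lam_eq (3 * u),
        ← completedRiemannZeta_one_sub (3 * u - 1),
        show (1 : ℂ) - (3 * u - 1) = 2 - 3 * u by ring, lam_FF (3 * u),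
        show -(3 * u) = (-3 : ℂ) * u by ring]
    have e3 : paperC (u + 1) = (gg (-u) + 1 / u) / FF u := by
      rw [paperC, show (u : ℂ) + 1 = 1 + u by ring, lam_eq' u,
        show ((1 : ℂ) + u) + 1 = 2 + u by ring]
      rfl
    have e4 : paperC (2 * u + 1) = (gg (-2 * u) + 1 / (2 * u)) / FF (2 * u) := by
      rw [paperC, show (2 * u : ℂ) + 1 = 1 + 2 * u by ring, lam_eq' (2 * u),
        show ((1 : ℂ) + 2 * u) + 1 = 2 + 2 * u by ring,
        show -(2 * u) = (-2 : ℂ) * u by ring]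
      rfl
    have e1' : paperC u = (u * gg u - 1) / (1 + u * gg (-u)) := by
      rw [e1, div_eq_div_iff hden1 hh1]
      field_simp
      ring
    have e2' : paperC (3 * u - 1) = (3 * u * FF (-3 * u)) / (3 * u * gg (3 * u) - 1) := by
      rw [e2, div_eq_div_iff hden2 hh2]
      field_simp
    have e3' : paperC (u + 1) = (1 + u * gg (-u)) / (u * FF u) := by
      rw [e3, div_eq_div_iff hh3 (mul_ne_zero h0 hh3)]
      field_simp
      ring
    have e4' : paperC (2 * u + 1) = (1 + 2 * u * gg (-2 * u)) / (2 * u * FF (2 * u)) := by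
      rw [e4, div_eq_div_iff hh4 (mul_ne_zero h20 hh4)]
      field_simp
      ring
    have hDd : (3 * (1 + u * gg (-u)) * (3 * u * gg (3 * u) - 1) * (u * FF u) *
        (2 * u * FF (2 * u))) ≠ 0 :=
      mul_ne_zero (mul_ne_zero (mul_ne_zero (mul_ne_zero three_ne_zero hh1) hh2)
        (mul_ne_zero h0 hh3)) (mul_ne_zero h20 hh4)
    have h2Lu : (2 : ℂ) * L * u ≠ 0 := mul_ne_zero (mul_ne_zero two_ne_zero hL) h0
    have hdenL : u * (2 * L * ((3 * u * gg (3 * u) - 1) * FF u * FF (2 * u))) ≠ 0 :=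
      mul_ne_zero h0 (mul_ne_zero (mul_ne_zero two_ne_zero hL)
        (mul_ne_zero (mul_ne_zero hh2 hh3) hh4))
    rw [e1', e2', e3', e4', show (3 : ℂ) / Real.pi = 1 / (2 * L) by
      rw [hLdef, show 2 * ((Real.pi : ℂ) / 6) = (Real.pi : ℂ) / 3 by ring, one_div_div]]
    simp only [hAdef]
    rw [div_div, div_mul_div_comm, div_mul_div_comm, div_mul_div_comm, div_mul_div_comm,
      div_div, div_sub_div _ _ hDd h2Lu, div_eq_div_iff hdenL (mul_ne_zero hDd h2Lu)]
    ring
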